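/- Let q = 2^h, k ≥ 1, and gcd(i, hk) = 1. For u ∈ F_{q^k}^* define T_u = {(α u, α u^(2^i)) : α ∈ F_{q^k}} ⊆ F_{q^k} × F_{q^k}. If u1, u2 ∈ F_{q^k}^* and there exist α1, α2 ∈ F_{q^k}^* and μ ∈ F_q^* with (α1 u1, α1 u1^(2^i)) = (μ α2 u2, μ α2 u2^(2^i)), then u1 = u2. -/

import Mathlib

private lemma fix_pow_iter {M : Type*} [Monoid M] (x : M) (n : ℕ) (hx : x ^ n = x) :
    ∀ b, x ^ n ^ b = x := by
  intro b
  induction b with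
  | zero => simp
  | succ b ih => rw [pow_succ, pow_mul, ih, hx]


/-- Let `q = 2^h`, `K = F_{q^k}`, `gcd(i, hk) = 1`. If for `u1, u2 ∈ K^*` there exist
`α1, α2 ∈ K^*` and `μ ∈ F_q^*` with `(α1 u1, α1 u1^(2^i)) = (μ α2 u2, μ α2 u2^(2^i))`,
then `u1 = u2`; i.e. distinct `u` give projectively disjoint spread elements `T_u`. -/
theorem spread_elements_disjoint (h k i : ℕ) (hh : 1 ≤ h) (hk : 1 ≤ k)
    (hgcd : Nat.gcd i (h * k) = 1)
    (Fq K : Type) [Field Fq] [Field K] [Algebra Fq K]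
    [Fintype Fq] [Fintype K]
    (hq : Fintype.card Fq = 2 ^ h) (hK : Fintype.card K = 2 ^ (h * k))
    (u1 u2 : K) (hu1 : u1 ≠ 0) (hu2 : u2 ≠ 0)
    (α1 α2 : K) (hα1 : α1 ≠ 0) (hα2 : α2 ≠ 0)
    (mu : Fq) (hmu : mu ≠ 0)
    (e1 : α1 * u1 = algebraMap Fq K mu * α2 * u2)
    (e2 : α1 * u1 ^ 2 ^ i = algebraMap Fq K mu * α2 * u2 ^ 2 ^ i) :
    u1 = u2 := by
  -- key relation: u1^(2^i) * u2 = u2^(2^i) * u1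
  have key : u1 ^ 2 ^ i * u2 = u2 ^ 2 ^ i * u1 := by
    have h1 : α1 * u1 ^ 2 ^ i * u2 = (algebraMap Fq K mu * α2 * u2 ^ 2 ^ i) * u2 := by
      rw [e2]
    have h2 : (algebraMap Fq K mu * α2 * u2 ^ 2 ^ i) * u2
        = u2 ^ 2 ^ i * (algebraMap Fq K mu * α2 * u2) := by ring
    rw [h2, ← e1] at h1
    have h3 : α1 * (u1 ^ 2 ^ i * u2) = α1 * (u2 ^ 2 ^ i * u1) := by
      linear_combination h1
    exact mul_left_cancel₀ hα1 h3
  -- v = u1 / u2 satisfies v^(2^i) = v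
  set v : K := u1 * u2⁻¹ with hv_def
  have hv0 : v ≠ 0 := mul_ne_zero hu1 (inv_ne_zero hu2)
  have hvi : v ^ 2 ^ i = v := by
    have hu2p : u2 ^ 2 ^ i ≠ 0 := pow_ne_zero _ hu2
    rw [hv_def, mul_pow, inv_pow]
    field_simp
    linear_combination key
  -- v^(2^(h*k)) = v since card K = 2^(h*k)
  have hvK : v ^ 2 ^ (h * k) = v := by
    rw [← hK]; exact FiniteField.pow_card v
  -- conclude v = 1 using gcd(i, h*k) = 1
  have hv1 : v = 1 := by
    have hvsq : v ^ 2 = v := by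
      by_cases hhk : h * k = 1
      · simpa [hhk] using hvK
      · have hhk1 : 1 < h * k := lt_of_le_of_ne
          (Nat.one_le_iff_ne_zero.mpr (by positivity)) (Ne.symm hhk)
        obtain ⟨m, -, hm⟩ := Nat.exists_mul_mod_eq_one_of_coprime hgcd hhk1
        have hdiv : i * m = h * k * (i * m / (h * k)) + 1 := by
          conv_lhs => rw [← Nat.div_add_mod (i * m) (h * k)]
          rw [hm]
        have h1 : v ^ 2 ^ (i * m) = v := by
          rw [pow_mul]
          exact fix_pow_iter v (2 ^ i) hvi m
        have h2 : v ^ 2 ^ (h * k * (i * m / (h * k)) + 1) = v ^ 2 := by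
          rw [pow_succ, pow_mul, Nat.pow_mul, fix_pow_iter v (2 ^ (h * k)) hvK]
        rw [hdiv] at h1
        exact h2.symm.trans h1
    have : v * (v - 1) = 0 := by
      have : v ^ 2 - v = 0 := by rw [hvsq]; ring
      linear_combination this
    rcases mul_eq_zero.mp this with h' | h'
    · exact absurd h' hv0
    · exact sub_eq_zero.mp h'
  -- finish
  have : u1 = v * u2 := by
    rw [hv_def, mul_assoc, inv_mul_cancel₀ hu2, mul_one]
  rw [this, hv1, one_mul]
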